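/- Let l be an odd prime, let q ≥ 2 be an integer not divisible by l, and suppose that the multiplicative order e of −q modulo l is odd. Then for every partition λ of n, the l-adic valuation of the rational number P_λ(q²) equals the l-adic valuation of the rational number P_λ(−q). (That is, the unipotent character degrees P_λ(q²) of GL_n(q²) and |P_λ(−q)| of U_n(q) have the same l-part.) -/

import Mathlib

/-- `f` encodes a partition `λ` via its parts `λ_i = f i` for `i ≥ 1` (and `f 0 = 0`):
the parts are weakly decreasing and eventually zero. -/
def IsPartition (f : ℕ → ℕ) : Prop :=
  f 0 = 0 ∧ (∀ i, 1 ≤ i → f (i + 1) ≤ f i) ∧ ∃ N, ∀ i, N ≤ i → f i = 0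

/-- The conjugate partition: `conjP f j = #{i ≥ 1 | f i ≥ j}`. -/
noncomputable def conjP (f : ℕ → ℕ) (j : ℕ) : ℕ :=
  Set.ncard {i : ℕ | 1 ≤ i ∧ j ≤ f i}

/-- The size `|λ| = Σ_i λ_i` of the partition. -/
noncomputable def wtP (f : ℕ → ℕ) : ℕ := ∑ᶠ i, f i

/-- `d_λ = Σ_i (λ'_i)² − Σ_i i·λ_i`. -/
noncomputable def dP (f : ℕ → ℕ) : ℤ :=
  (∑ᶠ i : ℕ, (conjP f i : ℤ) ^ 2) - ∑ᶠ i : ℕ, (i : ℤ) * (f i : ℤ)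

/-- The multiset of hook lengths of the partition: for each cell `(i,j)` of the Young
diagram (`1 ≤ i`, `1 ≤ j ≤ λ_i`) the hook length `λ_i − j + λ'_j − i + 1`. -/
noncomputable def hooksP (f : ℕ → ℕ) : Multiset ℤ :=
  (((Finset.Icc 1 (conjP f 1)) ×ˢ (Finset.Icc 1 (f 1))).filter
      (fun p => p.2 ≤ f p.1)).val.map
    (fun p => (f p.1 : ℤ) - (p.2 : ℤ) + (conjP f p.2 : ℤ) - (p.1 : ℤ) + 1)

/-- `P_λ(x) = x^{d_λ} · ∏_{i=1}^{|λ|} (x^i − 1) / ∏_{h ∈ hooks(λ)} (x^h − 1)`. -/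
noncomputable def PP (f : ℕ → ℕ) (x : ℚ) : ℚ :=
  x ^ dP f * (∏ i ∈ Finset.Icc 1 (wtP f), (x ^ i - 1)) /
    ((hooksP f).map (fun h => x ^ h - 1)).prod

/-- If the order of `-q` mod `l` is odd and `l` is an odd prime, then `l` never
divides `(-q)^k + 1`. -/
lemma aux_not_dvd_pow_add_one {l : ℕ} (hl : l.Prime) (hlodd : Odd l) (q : ℤ)
    (he : Odd (orderOf ((-q : ℤ) : ZMod l))) (k : ℕ) :
    ¬ (l : ℤ) ∣ (-q) ^ k + 1 := by
  haveI : Fact l.Prime := ⟨hl⟩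
  intro h
  set a : ZMod l := ((-q : ℤ) : ZMod l) with ha
  have h1 : a ^ k = -1 := by
    have h0 : (((-q) ^ k + 1 : ℤ) : ZMod l) = 0 :=
      (ZMod.intCast_zmod_eq_zero_iff_dvd _ l).mpr h
    push_cast at h0
    rw [ha]
    push_cast
    linear_combination h0
  have h2 : a ^ (k * 2) = 1 := by
    rw [pow_mul, h1]; ring
  have hdvd : orderOf a ∣ k * 2 := orderOf_dvd_of_pow_eq_one h2
  have hcop : Nat.Coprime (orderOf a) 2 :=
    Nat.coprime_comm.mp ((Nat.Prime.coprime_iff_not_dvd Nat.prime_two).mpr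
      (by simpa [Nat.two_dvd_ne_zero, Nat.odd_iff] using he))
  have hk : orderOf a ∣ k := Nat.Coprime.dvd_of_dvd_mul_right hcop hdvd
  have h3 : a ^ k = 1 := orderOf_dvd_iff_pow_eq_one.mp hk
  rw [h3] at h1
  have h4 : ((2 : ℕ) : ZMod l) = 0 := by push_cast; linear_combination h1
  have h5 : l ∣ 2 := (ZMod.natCast_eq_zero_iff _ _).mp h4
  have : l = 2 := (Nat.prime_dvd_prime_iff_eq hl Nat.prime_two).mp h5
  rw [this] at hlodd
  exact (Nat.not_odd_iff_even.mpr (even_two)) hlodd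

/-- product of a multiset of rationals, all nonzero with zero `l`-adic valuation. -/
lemma aux_multiset_val (l : ℕ) [Fact l.Prime] (s : Multiset ℚ)
    (h : ∀ a ∈ s, a ≠ 0 ∧ padicValRat l a = 0) :
    s.prod ≠ 0 ∧ padicValRat l s.prod = 0 := by
  induction s using Multiset.induction_on with
  | empty => simp
  | cons a s ih =>
    have ha := h a (Multiset.mem_cons_self a s)
    have hs := ih (fun b hb => h b (Multiset.mem_cons_of_mem hb))
    rw [Multiset.prod_cons]
    exact ⟨mul_ne_zero ha.1 hs.1,
      by rw [padicValRat.mul ha.1 hs.1, ha.2, hs.2]; ring⟩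

/-- Let `l` be an odd prime, `q ≥ 2` an integer not divisible by `l`,
and suppose the multiplicative order of `-q` modulo `l` is odd.  Then for every
partition `λ` of `n`, the `l`-adic valuation of `P_λ(q²)` equals the `l`-adic valuation
of `P_λ(−q)` (so the unipotent character degrees `P_λ(q²)` of `GL_n(q²)` and
`|P_λ(−q)|` of `U_n(q)` have the same `l`-part). -/
theorem padicValRat_P_q_sq_eq_padicValRat_P_neg_q
    (l : ℕ) (hl : l.Prime) (hlodd : Odd l) (q : ℤ) (hq2 : 2 ≤ q) (hq : ¬ (l : ℤ) ∣ q)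
    (he : Odd (orderOf ((-q : ℤ) : ZMod l)))
    (n : ℕ) (f : ℕ → ℕ) (hf : IsPartition f) (hfn : wtP f = n) :
    padicValRat l (PP f ((q : ℚ) ^ 2)) = padicValRat l (PP f (-(q : ℚ))) := by
  haveI : Fact l.Prime := ⟨hl⟩
  set x : ℚ := -(q : ℚ) with hxdef
  have hqQ : (2 : ℚ) ≤ (q : ℚ) := by exact_mod_cast hq2
  have hq1 : (1 : ℚ) < (q : ℚ) := by linarith
  have hx0 : x ≠ 0 := by
    simp only [hxdef, neg_ne_zero]
    intro h; rw [h] at hq1; norm_num at hq1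
  have habs : |x| = (q : ℚ) := by
    rw [hxdef, abs_neg, abs_of_pos (by linarith)]
  have hsq : ((q : ℚ)) ^ 2 = x ^ 2 := by rw [hxdef]; ring
  clear_value x
  rw [hsq]
  by_cases h0 : (0 : ℤ) ∈ hooksP f
  · -- degenerate case: a zero factor in both denominators
    have d1 : ((hooksP f).map (fun h => (x ^ 2 : ℚ) ^ h - 1)).prod = 0 :=
      Multiset.prod_eq_zero (Multiset.mem_map.mpr ⟨0, h0, by simp⟩)
    have d2 : ((hooksP f).map (fun h => x ^ h - 1)).prod = 0 :=
      Multiset.prod_eq_zero (Multiset.mem_map.mpr ⟨0, h0, by simp⟩)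
    rw [PP, PP, d1, d2, div_zero, div_zero]
  -- main case
  have hint : ∀ m : ℤ, ¬ (l : ℤ) ∣ m → padicValRat l (m : ℚ) = 0 := by
    intro m hm
    rw [padicValRat.of_int, padicValInt.eq_zero_of_not_dvd hm, Nat.cast_zero]
  have hlZ : Prime (l : ℤ) := Nat.prime_iff_prime_int.mp hl
  have hA : ∀ k : ℕ, ¬ (l : ℤ) ∣ (-q) ^ k := fun k h =>
    hq ((dvd_neg).mp (hlZ.dvd_of_dvd_pow h))
  have hvpow : ∀ k : ℕ, padicValRat l (x ^ k) = 0 := by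
    intro k
    have hc : x ^ k = (((-q) ^ k : ℤ) : ℚ) := by rw [hxdef]; push_cast; ring
    rw [hc]; exact hint _ (hA k)
  have hvpowz : ∀ m : ℤ, padicValRat l (x ^ m) = 0 := by
    intro m
    obtain ⟨k, rfl | rfl⟩ := Int.eq_nat_or_neg m
    · rw [zpow_natCast]; exact hvpow k
    · rw [zpow_neg, zpow_natCast, padicValRat.inv, hvpow k, neg_zero]
  have hvadd : ∀ k : ℕ, x ^ k + 1 ≠ 0 ∧ padicValRat l (x ^ k + 1) = 0 := by
    intro k
    have hnd := aux_not_dvd_pow_add_one hl hlodd q he k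
    have hz : ((-q) ^ k + 1 : ℤ) ≠ 0 := fun h => hnd (h ▸ dvd_zero _)
    have hc : x ^ k + 1 = (((-q) ^ k + 1 : ℤ) : ℚ) := by rw [hxdef]; push_cast; ring
    constructor
    · rw [hc]; exact_mod_cast hz
    · rw [hc]; exact hint _ hnd
  have hvaddz : ∀ m : ℤ, x ^ m + 1 ≠ 0 ∧ padicValRat l (x ^ m + 1) = 0 := by
    intro m
    obtain ⟨k, rfl | rfl⟩ := Int.eq_nat_or_neg m
    · rw [zpow_natCast]; exact hvadd k
    · have hxk : x ^ k ≠ 0 := pow_ne_zero k hx0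
      have hid : x ^ (-(k : ℤ)) + 1 = (x ^ k + 1) * (x ^ k)⁻¹ := by
        rw [zpow_neg, zpow_natCast]; field_simp; ring
      rw [hid]
      refine ⟨mul_ne_zero (hvadd k).1 (inv_ne_zero hxk), ?_⟩
      rw [padicValRat.mul (hvadd k).1 (inv_ne_zero hxk), (hvadd k).2,
        padicValRat.inv, hvpow k, neg_zero, add_zero]
  have key : ∀ k : ℕ, k ≠ 0 → x ^ k ≠ 1 := by
    intro k hk h
    have h1 : |x| ^ k = 1 := by rw [← abs_pow, h, abs_one]
    rw [habs] at h1
    have h2 : (1 : ℚ) < (q : ℚ) ^ k := one_lt_pow₀ hq1 hk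
    rw [h1] at h2; exact lt_irrefl _ h2
  have hne1 : ∀ m : ℤ, m ≠ 0 → x ^ m - 1 ≠ 0 := by
    intro m hm
    obtain ⟨k, rfl | rfl⟩ := Int.eq_nat_or_neg m
    · rw [zpow_natCast]
      intro h
      exact key k (by exact_mod_cast hm) (by linarith [sub_eq_zero.mp h])
    · rw [zpow_neg, zpow_natCast]
      intro h
      have h1 : (x ^ k)⁻¹ = 1 := sub_eq_zero.mp h
      exact key k (by simpa using hm) (inv_eq_one.mp h1)
  -- notation
  set H := hooksP f with hH
  set B := ∏ i ∈ Finset.Icc 1 (wtP f), (x ^ i - 1) with hB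
  set B' := ∏ i ∈ Finset.Icc 1 (wtP f), (x ^ i + 1) with hB'
  set C := (H.map (fun h => x ^ h - 1)).prod with hC
  set C' := (H.map (fun h => x ^ h + 1)).prod with hC'
  have e1 : (x ^ 2 : ℚ) ^ dP f = x ^ dP f * x ^ dP f := by
    rw [← zpow_natCast x 2, ← zpow_mul]
    norm_num
    rw [two_mul, zpow_add₀ hx0]
  have e2 : (∏ i ∈ Finset.Icc 1 (wtP f), ((x ^ 2 : ℚ) ^ i - 1)) = B * B' := by
    rw [hB, hB', ← Finset.prod_mul_distrib]
    refine Finset.prod_congr rfl (fun i _ => ?_)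
    rw [← pow_mul, mul_comm 2 i, pow_mul]
    ring
  have e3 : (H.map fun h => (x ^ 2 : ℚ) ^ h - 1)
      = H.map (fun h => (x ^ h - 1) * (x ^ h + 1)) := by
    refine Multiset.map_congr rfl (fun h _ => ?_)
    have : (x ^ 2 : ℚ) ^ h = (x ^ h) ^ 2 := by
      rw [← zpow_natCast x 2, ← zpow_mul, mul_comm, zpow_mul, zpow_natCast]
    rw [this]; ring
  have claim1 : PP f (x ^ 2) = (x ^ dP f * x ^ dP f * (B * B')) / (C * C') := by
    rw [PP, e1, e2, e3, Multiset.prod_map_mul, ← hC, ← hC']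
  have claim2 : PP f x = (x ^ dP f * B) / C := by rw [PP]
  -- nonvanishing and valuations
  have hxd0 : x ^ dP f ≠ 0 := zpow_ne_zero _ hx0
  have hB0 : B ≠ 0 := by
    rw [hB]
    refine Finset.prod_ne_zero_iff.mpr (fun i hi => ?_)
    have hi1 : 1 ≤ i := (Finset.mem_Icc.mp hi).1
    have := hne1 (i : ℤ) (by exact_mod_cast Nat.one_le_iff_ne_zero.mp hi1)
    rwa [zpow_natCast] at this
  have hC0 : C ≠ 0 := by
    rw [hC]
    refine Multiset.prod_ne_zero (fun hmem => ?_)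
    obtain ⟨h, hh, hEq⟩ := Multiset.mem_map.mp hmem
    exact hne1 h (fun e => h0 (e ▸ hh)) hEq
  have hBC' : B' ≠ 0 ∧ padicValRat l B' = 0 := by
    have := aux_multiset_val l (((Finset.Icc 1 (wtP f)).val).map (fun i => x ^ i + 1))
      (by
        intro a ha
        obtain ⟨i, _, rfl⟩ := Multiset.mem_map.mp ha
        exact hvadd i)
    exact this
  have hCC' : C' ≠ 0 ∧ padicValRat l C' = 0 := by
    rw [hC']
    refine aux_multiset_val l _ (fun a ha => ?_)
    obtain ⟨h, _, rfl⟩ := Multiset.mem_map.mp ha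
    exact hvaddz h
  have hN2 : x ^ dP f * x ^ dP f * (B * B') ≠ 0 :=
    mul_ne_zero (mul_ne_zero hxd0 hxd0) (mul_ne_zero hB0 hBC'.1)
  rw [claim1, claim2,
    padicValRat.div hN2 (mul_ne_zero hC0 hCC'.1),
    padicValRat.div (mul_ne_zero hxd0 hB0) hC0,
    padicValRat.mul (mul_ne_zero hxd0 hxd0) (mul_ne_zero hB0 hBC'.1),
    padicValRat.mul hxd0 hxd0,
    padicValRat.mul hB0 hBC'.1,
    padicValRat.mul hC0 hCC'.1,
    padicValRat.mul hxd0 hB0,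
    hvpowz (dP f), hBC'.2, hCC'.2]
  ring
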